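/- arXiv:1408.5518 — 5 statements merged into one kernel-verified Lean document; each statement's English description precedes it below -/
import Mathlib

section
/- Let F be a field, let α ∈ F be an element of multiplicative order n, and let r be a natural number with 1 ≤ r < n. If p is a nonzero polynomial over F with degree strictly less than n such that p(α^i) = 0 for every i ∈ {1, 2, …, r}, then p has at least r + 1 nonzero coefficients. -/
open Polynomial

private theorem bch_aux {F : Type*} [Field F] (α : F) (n : ℕ)
    (hn : orderOf α = n) (hn0 : 0 < n) :
    ∀ r, r < n → ∀ p : Polynomial F, p ≠ 0 → p.degree < (n : ℕ) →
      (∀ i : ℕ, 1 ≤ i → i ≤ r → p.eval (α ^ i) = 0) → r + 1 ≤ p.support.card := by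
  have hα : α ≠ 0 := by
    intro h
    have h1 : α ^ n = 1 := hn ▸ pow_orderOf_eq_one α
    rw [h, zero_pow hn0.ne'] at h1
    exact one_ne_zero h1.symm
  have hpowinj : ∀ k m : ℕ, k < n → m < n → α ^ k = α ^ m → k = m := by
    intro k m hk hm h
    by_contra hne
    -- wlog m < k
    wlog hlt : m < k generalizing k m
    · exact this m k hm hk h.symm (Ne.symm hne) (by omega)
    have hkm : α ^ (k - m) = 1 := by
      have : α ^ m * α ^ (k - m) = α ^ m * 1 := by
        rw [mul_one, ← pow_add]
        rw [show m + (k - m) = k by omega, h]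
      exact mul_left_cancel₀ (pow_ne_zero m hα) this
    have := orderOf_le_of_pow_eq_one (by omega : 0 < k - m) hkm
    omega
  intro r
  induction r with
  | zero =>
    intro _ p hp _ _
    have : p.support.Nonempty := Polynomial.support_nonempty.mpr hp
    simpa using Finset.card_pos.mpr this
  | succ r ih =>
    intro hrn p hp hdeg hroots
    set m := p.natTrailingDegree with hm_def
    have hm : m ∈ p.support := Polynomial.natTrailingDegree_mem_support_of_nonzero hp
    have hsup_lt : ∀ k ∈ p.support, k < n := by
      intro k hk
      have h1 : (k : WithBot ℕ) ≤ p.degree :=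
        Polynomial.le_degree_of_ne_zero (Polynomial.mem_support_iff.mp hk)
      have := lt_of_le_of_lt h1 hdeg
      exact_mod_cast this
    -- the auxiliary polynomial q(X) = p(αX) - α^m * p(X)
    set q : Polynomial F :=
      ∑ k ∈ p.support, Polynomial.monomial k (p.coeff k * (α ^ k - α ^ m)) with hq_def
    have hqcoeff : ∀ j, q.coeff j = p.coeff j * (α ^ j - α ^ m) := by
      intro j
      rw [hq_def, Polynomial.finset_sum_coeff]
      simp only [Polynomial.coeff_monomial]
      rw [Finset.sum_ite_eq' p.support j (fun k => p.coeff k * (α ^ k - α ^ m))]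
      split_ifs with h
      · rfl
      · rw [Polynomial.notMem_support_iff.mp h, zero_mul]
    have hqsupp : q.support = p.support.erase m := by
      ext j
      simp only [Polynomial.mem_support_iff, hqcoeff, Finset.mem_erase]
      constructor
      · intro h
        have hj : p.coeff j ≠ 0 := fun hc => h (by rw [hc, zero_mul])
        refine ⟨fun hjm => h ?_, hj⟩
        rw [hjm, sub_self, mul_zero]
      · rintro ⟨hjm, hj⟩
        have hjn : j < n := hsup_lt j (Polynomial.mem_support_iff.mpr hj)
        have hmn : m < n := hsup_lt m hm
        have : α ^ j - α ^ m ≠ 0 := sub_ne_zero.mpr fun h => hjm (hpowinj j m hjn hmn h)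
        exact mul_ne_zero hj this
    have hcard2 : 2 ≤ p.support.card := by
      by_contra hc
      push_neg at hc
      have hsing : p.support = {m} := by
        apply Finset.eq_singleton_iff_unique_mem.mpr
        refine ⟨hm, fun x hx => ?_⟩
        by_contra hxm
        have : 2 ≤ p.support.card :=
          Finset.one_lt_card.mpr ⟨x, hx, m, hm, hxm⟩
        omega
      have heval : p.eval (α ^ 1) = p.coeff m * (α ^ 1) ^ m := by
        rw [Polynomial.eval_eq_sum, Polynomial.sum_def, hsing, Finset.sum_singleton]
      have h0 := hroots 1 le_rfl (by omega)
      rw [heval] at h0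
      have hcm : p.coeff m ≠ 0 := Polynomial.mem_support_iff.mp hm
      exact (mul_ne_zero hcm (pow_ne_zero m (pow_ne_zero 1 hα))) h0
    have hqcard : q.support.card = p.support.card - 1 := by
      rw [hqsupp, Finset.card_erase_of_mem hm]
    have hq0 : q ≠ 0 := by
      rw [← Polynomial.support_nonempty, ← Finset.card_pos, hqcard]
      omega
    have hqdeg : q.degree < (n : ℕ) := by
      have : q.support ⊆ p.support := by rw [hqsupp]; exact Finset.erase_subset m p.support
      exact lt_of_le_of_lt (Polynomial.degree_mono this) hdeg
    have hqroots : ∀ i : ℕ, 1 ≤ i → i ≤ r → q.eval (α ^ i) = 0 := by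
      intro i hi1 hir
      have key : q.eval (α ^ i) = p.eval (α ^ (i + 1)) - α ^ m * p.eval (α ^ i) := by
        rw [hq_def, Polynomial.eval_finset_sum]
        simp only [Polynomial.eval_monomial]
        rw [Polynomial.eval_eq_sum, Polynomial.sum_def, Polynomial.eval_eq_sum,
          Polynomial.sum_def, Finset.mul_sum, ← Finset.sum_sub_distrib]
        apply Finset.sum_congr rfl
        intro k _
        rw [pow_succ, mul_pow]
        ring
      rw [key, hroots (i + 1) (by omega) (by omega), hroots i hi1 (by omega),
        mul_zero, sub_zero]
    have := ih (by omega) q hq0 hqdeg hqroots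
    omega

/-- BCH-type minimum weight bound: if `α` has multiplicative order `n`,
`1 ≤ r < n`, and `p` is a nonzero polynomial of degree `< n` vanishing at
`α^1, …, α^r`, then `p` has at least `r + 1` nonzero coefficients. -/
theorem bch_weight_bound {F : Type*} [Field F] (α : F) (n r : ℕ)
    (hn : orderOf α = n) (hr1 : 1 ≤ r) (hrn : r < n)
    (p : Polynomial F) (hp : p ≠ 0) (hdeg : p.degree < (n : ℕ))
    (hroots : ∀ i : ℕ, 1 ≤ i → i ≤ r → p.eval (α ^ i) = 0) :
    r + 1 ≤ p.support.card := by
  exact bch_aux α n hn (by omega) r hrn p hp hdeg hroots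
end

section
/- Let F be a field, let α ∈ F be an element of multiplicative order n, let r be a natural number with 1 ≤ r < n, and let g = ∏_{i=1}^{r} (X − α^i). Then for any two distinct polynomials q₁, q₂ over F, each of degree strictly less than n − r, the coefficient vectors of q₁·g and q₂·g, viewed as functions Fin n → F (coefficient of X^j at position j), differ in at least r + 1 positions. -/
open Polynomial Finset Matrix

/-- A nonzero polynomial of degree `< n` that vanishes at `α, α², …, α^r`
(where `α` has order `n > r`) has more than `r` nonzero coefficients. -/
lemma rs_aux {F : Type*} [Field F] [DecidableEq F]
    (α : F) (n r : ℕ) (hn : orderOf α = n) (hrn : r < n)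
    (c : Polynomial F) (hc : c ≠ 0) (hdeg : c.natDegree < n)
    (hroots : ∀ i ∈ Finset.Icc 1 r, c.eval (α ^ i) = 0) :
    r + 1 ≤ c.support.card := by
  by_contra hlt
  push_neg at hlt
  have hwr : c.support.card ≤ r := Nat.lt_succ_iff.mp (by omega)
  set w := c.support.card with hw
  have npos : 0 < n := lt_of_le_of_lt (Nat.zero_le r) hrn
  have hα1 : α ^ n = 1 := by rw [← hn]; exact pow_orderOf_eq_one α
  have hα0 : α ≠ 0 := by
    intro h; rw [h, zero_pow npos.ne'] at hα1; exact zero_ne_one hα1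
  -- enumerate the support
  have e : Fin w ≃ {x // x ∈ c.support} := (c.support.equivFin).symm
  have hsupp_lt : ∀ j ∈ c.support, j < n := fun j hj =>
    lt_of_le_of_lt (Polynomial.le_natDegree_of_mem_supp j hj) hdeg
  set v : Fin w → F := fun k => α ^ ((e k : ℕ)) with hv
  have hvinj : Function.Injective v := by
    intro a b hab
    have ha := hsupp_lt _ (e a).2
    have hb := hsupp_lt _ (e b).2
    have : ((e a : ℕ)) = ((e b : ℕ)) :=
      pow_injOn_Iio_orderOf (by simpa [hn] using ha) (by simpa [hn] using hb) hab
    exact e.injective (Subtype.ext this)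
  have hvne : ∀ k, v k ≠ 0 := fun k => pow_ne_zero _ hα0
  set x : Fin w → F := fun k => c.coeff (e k) * v k with hx
  have hsys : (Matrix.vandermonde v)ᵀ.mulVec x = 0 := by
    funext i
    have hi : (i : ℕ) + 1 ∈ Finset.Icc 1 r := by
      simp only [Finset.mem_Icc]
      exact ⟨Nat.le_add_left 1 _, by have := i.2; omega⟩
    have heval : c.eval (α ^ ((i : ℕ) + 1)) = 0 := hroots _ hi
    rw [Polynomial.eval_eq_sum, Polynomial.sum_def] at heval
    simp only [Matrix.mulVec, dotProduct, Matrix.transpose_apply,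
      Matrix.vandermonde_apply, Pi.zero_apply]
    calc ∑ k, v k ^ (i : ℕ) * x k
        = ∑ k, c.coeff (e k) * (α ^ ((i : ℕ) + 1)) ^ ((e k : ℕ)) := by
          refine Finset.sum_congr rfl fun k _ => ?_
          simp only [hx, hv]
          have h1 : (α ^ ((i:ℕ)+1)) ^ ((e k : ℕ)) = (α ^ ((e k : ℕ))) ^ ((i:ℕ)+1) := by
            rw [← pow_mul, ← pow_mul, Nat.mul_comm]
          rw [h1, pow_succ]
          ring
      _ = ∑ j ∈ c.support, c.coeff j * (α ^ ((i : ℕ) + 1)) ^ j := by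
          rw [← Finset.sum_attach c.support (fun j => c.coeff j * (α ^ ((i:ℕ)+1)) ^ (j:ℕ))]
          exact Fintype.sum_equiv e _ _ (fun k => rfl)
      _ = 0 := heval
  have hdet : (Matrix.vandermonde v)ᵀ.det ≠ 0 := by
    rw [Matrix.det_transpose]
    exact Matrix.det_vandermonde_ne_zero_iff.mpr hvinj
  have hx0 : x = 0 := Matrix.eq_zero_of_mulVec_eq_zero hdet hsys
  obtain ⟨j, hj⟩ := Polynomial.support_nonempty.mpr hc
  have hk : x (e.symm ⟨j, hj⟩) = 0 := by rw [hx0]; rfl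
  simp only [hx, Equiv.apply_symm_apply, mul_eq_zero] at hk
  rcases hk with hk | hk
  · exact (Polynomial.mem_support_iff.mp hj) hk
  · exact hvne _ hk

/-- The Reed–Solomon code of block length `n` with generator polynomial
`g = ∏_{i=1}^r (X - α^i)` has minimum distance at least `r + 1`: the
coefficient vectors (in `Fin n → F`) of `q₁ * g` and `q₂ * g` for distinct
messages `q₁ ≠ q₂` of degree `< n - r` differ in at least `r + 1` positions. -/
theorem reed_solomon_min_distance {F : Type*} [Field F] [DecidableEq F]
    (α : F) (n r : ℕ)
    (hn : orderOf α = n) (hr1 : 1 ≤ r) (hrn : r < n)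
    (g : Polynomial F)
    (hg : g = ∏ i ∈ Finset.Icc 1 r, (Polynomial.X - Polynomial.C (α ^ i)))
    (q₁ q₂ : Polynomial F) (hq : q₁ ≠ q₂)
    (h₁ : q₁.degree < ((n - r : ℕ) : ℕ)) (h₂ : q₂.degree < ((n - r : ℕ) : ℕ)) :
    r + 1 ≤ hammingDist (fun j : Fin n => (q₁ * g).coeff j)
      (fun j : Fin n => (q₂ * g).coeff j) := by
  have npos : 0 < n := lt_of_le_of_lt (Nat.zero_le r) hrn
  set c : Polynomial F := (q₁ - q₂) * g with hc
  have hgmonic : g.Monic := by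
    rw [hg]; exact monic_prod_of_monic _ _ fun i _ => monic_X_sub_C _
  have hqne : q₁ - q₂ ≠ 0 := sub_ne_zero.mpr hq
  have hcne : c ≠ 0 := mul_ne_zero hqne hgmonic.ne_zero
  have hgdeg : g.degree = (r : ℕ) := by
    rw [hg, Polynomial.degree_prod]
    simp only [Polynomial.degree_X_sub_C, Finset.sum_const, Nat.card_Icc,
      Nat.add_sub_cancel, nsmul_eq_mul, mul_one]
  have hcdeg : c.degree < (n : ℕ) := by
    rw [hc, Polynomial.degree_mul, hgdeg]
    have hsub : (q₁ - q₂).degree < ((n - r : ℕ) : ℕ) :=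
      lt_of_le_of_lt (Polynomial.degree_sub_le _ _) (max_lt h₁ h₂)
    calc (q₁ - q₂).degree + (r : ℕ)
        < ((n - r : ℕ) : WithBot ℕ) + (r : ℕ) :=
          WithBot.add_lt_add_right (by exact_mod_cast WithBot.coe_ne_bot) hsub
      _ = ((n - r + r : ℕ) : WithBot ℕ) := by exact_mod_cast rfl
      _ = (n : ℕ) := by rw [Nat.sub_add_cancel hrn.le]
  have hcnatdeg : c.natDegree < n := (Polynomial.natDegree_lt_iff_degree_lt hcne).mpr hcdeg
  have hroots : ∀ i ∈ Finset.Icc 1 r, c.eval (α ^ i) = 0 := by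
    intro i hi
    rw [hc, Polynomial.eval_mul, hg, Polynomial.eval_prod]
    rw [Finset.prod_eq_zero hi (by simp)]
    ring
  have key := rs_aux α n r hn hrn c hcne hcnatdeg hroots
  refine le_trans key ?_
  unfold hammingDist
  apply Finset.card_le_card_of_injOn (fun j => (⟨j % n, Nat.mod_lt j npos⟩ : Fin n))
  · intro j hj
    have hjn : j < n := lt_of_le_of_lt (Polynomial.le_natDegree_of_mem_supp j hj) hcnatdeg
    simp only [Finset.mem_filter, Finset.mem_univ, true_and]
    have : c.coeff j ≠ 0 := Polynomial.mem_support_iff.mp hj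
    rw [hc, sub_mul] at this
    simp only [Polynomial.coeff_sub] at this
    simpa [Nat.mod_eq_of_lt hjn] using sub_ne_zero.mp (by simpa using this)
  · intro a ha b hb hab
    have han : a < n := lt_of_le_of_lt (Polynomial.le_natDegree_of_mem_supp a ha) hcnatdeg
    have hbn : b < n := lt_of_le_of_lt (Polynomial.le_natDegree_of_mem_supp b hb) hcnatdeg
    have := congrArg Fin.val hab
    simp only [Nat.mod_eq_of_lt han, Nat.mod_eq_of_lt hbn] at this
    exact this
end

section
/- Let F be a field, let α ∈ F be an element of multiplicative order n, let r be a natural number with 1 ≤ r < n, and let g = ∏_{i=1}^{r} (X − α^i). Let ι : F → (Fin M → Bool) be an inner encoding such that for all distinct a, b ∈ F the Hamming distance between ι(a) and ι(b) is at least e. Then for any two distinct polynomials q₁, q₂ over F, each of degree strictly less than n − r, the concatenated binary strings Fin n × Fin M → Bool given by (i, j) ↦ ι((q₁·g).coeff i) j and (i, j) ↦ ι((q₂·g).coeff i) j have Hamming distance at least (r + 1)·e. -/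
open Polynomial Finset

lemma bch_weight {F : Type*} [Field F] [DecidableEq F] (α : F) (n r : ℕ)
    (hn : orderOf α = n) (hrn : r < n)
    (f : Polynomial F) (hf : f ≠ 0) (hsupp : ∀ j ∈ f.support, j < n)
    (hroots : ∀ i, 1 ≤ i → i ≤ r → f.eval (α ^ i) = 0) :
    r + 1 ≤ f.support.card := by
  by_contra h
  push_neg at h
  set s := f.support.card with hscard
  have hs : s ≤ r := by omega
  have hspos : 0 < s := Finset.card_pos.mpr (Polynomial.support_nonempty.mpr hf)
  let E := f.support.equivFin
  let σ : Fin s → ℕ := fun j => (E.symm j : ℕ)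
  have hσmem : ∀ j, σ j ∈ f.support := fun j => (E.symm j).2
  have hσinj : Function.Injective σ := fun a b hab => E.symm.injective (Subtype.ext hab)
  let v : Fin s → F := fun j => α ^ σ j
  have hnpos : 0 < n := lt_of_le_of_lt (Nat.zero_le r) hrn
  have hα1 : α ^ n = 1 := hn ▸ pow_orderOf_eq_one α
  have hα0 : α ≠ 0 := by
    intro h0
    rw [h0, zero_pow hnpos.ne'] at hα1
    exact zero_ne_one hα1
  have hvinj : Function.Injective v := by
    intro a b hab
    apply hσinj
    exact pow_injOn_Iio_orderOf (by simpa [hn] using hsupp _ (hσmem a))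
      (by simpa [hn] using hsupp _ (hσmem b)) hab
  have hv0 : ∀ j, v j ≠ 0 := fun j => pow_ne_zero _ hα0
  let B : Matrix (Fin s) (Fin s) F := fun i j => v j ^ ((i : ℕ) + 1)
  have hBdet : B.det ≠ 0 := by
    have hB : B = Matrix.transpose (Matrix.diagonal v * Matrix.vandermonde v) := by
      ext i j
      simp [B, Matrix.transpose_apply, Matrix.diagonal_mul, Matrix.vandermonde,
        pow_succ, mul_comm]
    rw [hB, Matrix.det_transpose, Matrix.det_mul, Matrix.det_diagonal]
    exact mul_ne_zero (Finset.prod_ne_zero_iff.mpr fun j _ => hv0 j)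
      (Matrix.det_vandermonde_ne_zero_iff.mpr hvinj)
  let c : Fin s → F := fun j => f.coeff (σ j)
  have hc : B.mulVec c = 0 := by
    funext i
    have h2 : (i : ℕ) + 1 ≤ r := le_trans (Nat.succ_le_of_lt i.2) hs
    have hev := hroots ((i : ℕ) + 1) (Nat.le_add_left 1 _) h2
    have hev2 : ∑ j ∈ f.support, f.coeff j * (α ^ ((i : ℕ) + 1)) ^ j = 0 := by
      rw [Polynomial.eval_eq_sum, Polynomial.sum_def] at hev
      exact hev
    have hre : ∑ j ∈ f.support, f.coeff j * (α ^ ((i : ℕ) + 1)) ^ j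
        = ∑ j : Fin s, f.coeff (σ j) * (α ^ ((i : ℕ) + 1)) ^ (σ j) := by
      rw [← Finset.sum_attach f.support (fun j => f.coeff j * (α ^ ((i : ℕ) + 1)) ^ j)]
      exact (Equiv.sum_comp E.symm fun x => f.coeff (x : ℕ) * (α ^ ((i : ℕ) + 1)) ^ (x : ℕ)).symm
    simp only [Matrix.mulVec, dotProduct, Pi.zero_apply]
    rw [hre] at hev2
    rw [← hev2]
    apply Finset.sum_congr rfl
    intro j _
    simp only [B, c, v]
    rw [← pow_mul, ← pow_mul, mul_comm ((i:ℕ)+1) (σ j), mul_comm]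
  have hc0 : c = 0 := Matrix.eq_zero_of_mulVec_eq_zero hBdet hc
  have : f.coeff (σ ⟨0, hspos⟩) ≠ 0 := Polynomial.mem_support_iff.mp (hσmem ⟨0, hspos⟩)
  exact this (congrFun hc0 ⟨0, hspos⟩)

lemma hammingDist_prod_eq {n M : ℕ} (x y : Fin n → Fin M → Bool) :
    hammingDist (fun p : Fin n × Fin M => x p.1 p.2) (fun p : Fin n × Fin M => y p.1 p.2)
      = ∑ i : Fin n, hammingDist (x i) (y i) := by
  simp only [hammingDist, Finset.card_filter, Fintype.sum_prod_type]

/-- Distance of the concatenation of a Reed–Solomon outer code (multiples of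
`g = ∏_{i=1}^r (X - α^i)`) with an inner binary code `ι` of distance `e`:
distinct messages `q₁ ≠ q₂` of degree `< n - r` yield concatenated binary
strings at Hamming distance at least `(r + 1) * e`. -/
theorem reed_solomon_concatenation_distance {F : Type*} [Field F] [DecidableEq F]
    (α : F) (n r M e : ℕ)
    (hn : orderOf α = n) (hr1 : 1 ≤ r) (hrn : r < n)
    (g : Polynomial F)
    (hg : g = ∏ i ∈ Finset.Icc 1 r, (Polynomial.X - Polynomial.C (α ^ i)))
    (ι : F → Fin M → Bool)
    (hι : ∀ a b : F, a ≠ b → e ≤ hammingDist (ι a) (ι b))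
    (q₁ q₂ : Polynomial F) (hq : q₁ ≠ q₂)
    (h₁ : q₁.degree < ((n - r : ℕ) : ℕ)) (h₂ : q₂.degree < ((n - r : ℕ) : ℕ)) :
    (r + 1) * e ≤ hammingDist
      (fun p : Fin n × Fin M => ι ((q₁ * g).coeff p.1) p.2)
      (fun p : Fin n × Fin M => ι ((q₂ * g).coeff p.1) p.2) := by
  set p := q₁ - q₂ with hpdef
  have hp : p ≠ 0 := sub_ne_zero.mpr hq
  have hgmonic : g.Monic := by
    rw [hg]; exact monic_prod_of_monic _ _ fun i _ => monic_X_sub_C _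
  have hgne : g ≠ 0 := hgmonic.ne_zero
  set f := p * g with hfdef
  have hfne : f ≠ 0 := mul_ne_zero hp hgne
  have hgdeg : g.natDegree = r := by
    rw [hg, Polynomial.natDegree_prod _ _ fun i _ => Polynomial.X_sub_C_ne_zero _,
      Finset.sum_congr rfl fun i _ => Polynomial.natDegree_X_sub_C (α ^ i),
      Finset.sum_const, smul_eq_mul, mul_one, Nat.card_Icc]
    omega
  have hpdeg : p.natDegree < n - r := by
    have hd : p.degree < ((n - r : ℕ) : WithBot ℕ) :=
      lt_of_le_of_lt (Polynomial.degree_sub_le _ _) (max_lt h₁ h₂)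
    exact (Polynomial.natDegree_lt_iff_degree_lt hp).mpr hd
  have hfdeg : f.natDegree < n := by
    rw [hfdef, Polynomial.natDegree_mul hp hgne, hgdeg]
    omega
  have hsupp : ∀ j ∈ f.support, j < n := fun j hj =>
    lt_of_le_of_lt (Polynomial.le_natDegree_of_mem_supp j hj) hfdeg
  have hroots : ∀ i, 1 ≤ i → i ≤ r → f.eval (α ^ i) = 0 := by
    intro i hi1 hir
    have : g.eval (α ^ i) = 0 := by
      rw [hg, Polynomial.eval_prod]
      exact Finset.prod_eq_zero (Finset.mem_Icc.mpr ⟨hi1, hir⟩) (by simp)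
    rw [hfdef, Polynomial.eval_mul, this, mul_zero]
  have hw : r + 1 ≤ f.support.card := bch_weight α n r hn hrn f hfne hsupp hroots
  set T : Finset (Fin n) := f.support.attachFin hsupp with hT
  have hTcard : r + 1 ≤ T.card := by rw [hT, Finset.card_attachFin]; exact hw
  have hdiff : ∀ i ∈ T, (q₁ * g).coeff (i : ℕ) ≠ (q₂ * g).coeff (i : ℕ) := by
    intro i hi
    have hmem : (i : ℕ) ∈ f.support := (Finset.mem_attachFin hsupp).mp hi
    have hco : f.coeff (i : ℕ) ≠ 0 := Polynomial.mem_support_iff.mp hmem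
    intro heq
    apply hco
    rw [hfdef, hpdef, sub_mul, Polynomial.coeff_sub, heq, sub_self]
  rw [hammingDist_prod_eq (fun i j => ι ((q₁ * g).coeff i) j)
    (fun i j => ι ((q₂ * g).coeff i) j)]
  calc (r + 1) * e ≤ T.card * e := Nat.mul_le_mul_right e hTcard
    _ = ∑ _i ∈ T, e := by rw [Finset.sum_const, smul_eq_mul]
    _ ≤ ∑ i ∈ T, hammingDist (ι ((q₁ * g).coeff (i : ℕ))) (ι ((q₂ * g).coeff (i : ℕ))) :=
        Finset.sum_le_sum fun i hi => hι _ _ (hdiff i hi)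
    _ ≤ ∑ i : Fin n, hammingDist (ι ((q₁ * g).coeff (i : ℕ))) (ι ((q₂ * g).coeff (i : ℕ))) :=
        Finset.sum_le_sum_of_subset (Finset.subset_univ T)
end

section
/- There exists a real constant δ > 0 such that for every sufficiently large natural number b there exists a multiplier m < 2^{3b} with the following property: for all distinct x, y ∈ [0, 2^b − 1], the 4b-bit binary representations of m·x and m·y (both products are less than 2^{4b}) differ in at least δ·b bit positions. -/
open Finset

lemma int_eq_sum_testBit : ∀ (n : ℕ) (v : ℕ), v < 2 ^ n →
    (v : ℤ) = ∑ i ∈ range n, (if v.testBit i then (2:ℤ) ^ i else 0) := by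
  intro n
  induction n with
  | zero => intro v hv; interval_cases v; simp
  | succ n ih =>
    intro v hv
    have h2 : v / 2 < 2 ^ n := by
      rw [Nat.div_lt_iff_lt_mul (by norm_num)]
      calc v < 2 ^ (n+1) := hv
      _ = 2 ^ n * 2 := by ring
    have key := ih (v / 2) h2
    rw [Finset.sum_range_succ']
    have hbits : ∀ i : ℕ, v.testBit (i+1) = (v/2).testBit i := by
      intro i; rw [Nat.testBit_add_one]
    have : ∑ i ∈ range n, (if v.testBit (i+1) then (2:ℤ) ^ (i+1) else 0)
        = 2 * ∑ i ∈ range n, (if (v/2).testBit i then (2:ℤ) ^ i else 0) := by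
      rw [Finset.mul_sum]
      refine Finset.sum_congr rfl fun i _ => ?_
      rw [hbits i]
      split <;> ring
    rw [this, ← key]
    have hmod : (if v.testBit 0 then (2:ℤ) ^ 0 else 0) = (v % 2 : ℕ) := by
      rcases Nat.mod_two_eq_zero_or_one v with h | h <;>
        simp [Nat.testBit_zero, h, Nat.mod_two_eq_one_iff_testBit_zero]
    rw [hmod]
    push_cast
    omega

/-- Values expressible as a signed sum of at most `k` powers `2^i`, `i < n`. -/
def sigSet (n k : ℕ) : Finset ℤ :=
  (((Finset.range (k+1)).biUnion fun j =>
      (Finset.powersetCard j (Finset.univ : Finset (Fin n))).sigma fun s => s.powerset).image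
    fun p : Σ _ : Finset (Fin n), Finset (Fin n) => (∑ i ∈ p.2, (2:ℤ) ^ (i : ℕ)) - ∑ i ∈ p.1 \ p.2, (2:ℤ) ^ (i : ℕ))

lemma card_sigSet_le (n k : ℕ) :
    (sigSet n k).card ≤ ∑ j ∈ range (k+1), n.choose j * 2 ^ j := by
  refine (Finset.card_image_le).trans ?_
  refine (Finset.card_biUnion_le).trans ?_
  refine Finset.sum_le_sum fun j _ => ?_
  rw [Finset.card_sigma]
  calc ∑ s ∈ Finset.powersetCard j (Finset.univ : Finset (Fin n)), s.powerset.card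
      = ∑ s ∈ Finset.powersetCard j (Finset.univ : Finset (Fin n)), 2 ^ j := by
        refine Finset.sum_congr rfl fun s hs => ?_
        rw [Finset.card_powerset, (Finset.mem_powersetCard.mp hs).2]
    _ = n.choose j * 2 ^ j := by
        rw [Finset.sum_const, Finset.card_powersetCard, Finset.card_univ, Fintype.card_fin,
          smul_eq_mul]
    _ ≤ n.choose j * 2 ^ j := le_rfl

lemma sub_mem_sigSet {n k u v : ℕ} (hu : u < 2 ^ n) (hv : v < 2 ^ n)
    (h : hammingDist (fun i : Fin n => v.testBit i) (fun i : Fin n => u.testBit i) ≤ k) :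
    (v : ℤ) - u ∈ sigSet n k := by
  classical
  set s : Finset (Fin n) := univ.filter fun i => v.testBit (i : ℕ) ≠ u.testBit (i : ℕ) with hs
  set p : Finset (Fin n) := s.filter fun i => v.testBit (i : ℕ) with hp
  have hcard : s.card ≤ k := by
    have : hammingDist (fun i : Fin n => v.testBit i) (fun i : Fin n => u.testBit i)
        = s.card := rfl
    omega
  rw [sigSet, Finset.mem_image]
  refine ⟨⟨s, p⟩, ?_, ?_⟩
  · rw [Finset.mem_biUnion]
    refine ⟨s.card, Finset.mem_range.mpr (by omega), ?_⟩
    rw [Finset.mem_sigma]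
    exact ⟨Finset.mem_powersetCard.mpr ⟨Finset.subset_univ _, rfl⟩,
      Finset.mem_powerset.mpr (Finset.filter_subset _ _)⟩
  · -- value computation
    have hv' := int_eq_sum_testBit n v hv
    have hu' := int_eq_sum_testBit n u hu
    have hsum : (v : ℤ) - u = ∑ i : Fin n,
        ((if v.testBit (i : ℕ) then (2:ℤ) ^ (i : ℕ) else 0)
          - (if u.testBit (i : ℕ) then (2:ℤ) ^ (i : ℕ) else 0)) := by
      rw [Finset.sum_sub_distrib,
        Fin.sum_univ_eq_sum_range (fun j => if v.testBit j then (2:ℤ) ^ j else 0),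
        Fin.sum_univ_eq_sum_range (fun j => if u.testBit j then (2:ℤ) ^ j else 0),
        ← hv', ← hu']
    have hsub : (v : ℤ) - u = ∑ i ∈ s,
        ((if v.testBit (i : ℕ) then (2:ℤ) ^ (i : ℕ) else 0)
          - (if u.testBit (i : ℕ) then (2:ℤ) ^ (i : ℕ) else 0)) := by
      rw [hsum]
      refine (Finset.sum_subset (Finset.subset_univ s) fun i _ hi => ?_).symm
      have : v.testBit (i : ℕ) = u.testBit (i : ℕ) := by
        by_contra hne
        exact hi (Finset.mem_filter.mpr ⟨Finset.mem_univ i, hne⟩)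
      rw [this]; ring
    have hsplit := Finset.sum_filter_add_sum_filter_not s (fun i => v.testBit (i : ℕ))
      (fun i => (if v.testBit (i : ℕ) then (2:ℤ) ^ (i : ℕ) else 0)
          - (if u.testBit (i : ℕ) then (2:ℤ) ^ (i : ℕ) else 0))
    have hpos : ∑ i ∈ p, ((if v.testBit (i : ℕ) then (2:ℤ) ^ (i : ℕ) else 0)
          - (if u.testBit (i : ℕ) then (2:ℤ) ^ (i : ℕ) else 0)) = ∑ i ∈ p, (2:ℤ) ^ (i : ℕ) := by
      refine Finset.sum_congr rfl fun i hi => ?_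
      rw [hp, Finset.mem_filter] at hi
      obtain ⟨his, hvi⟩ := hi
      rw [hs, Finset.mem_filter] at his
      have hui : u.testBit (i : ℕ) = false := by
        cases hval : u.testBit (i : ℕ)
        · rfl
        · exact absurd (hvi.trans hval.symm) his.2
      simp [hvi, hui]
    have hneg : ∑ i ∈ s.filter (fun i : Fin n => ¬ v.testBit (i : ℕ)),
        ((if v.testBit (i : ℕ) then (2:ℤ) ^ (i : ℕ) else 0)
          - (if u.testBit (i : ℕ) then (2:ℤ) ^ (i : ℕ) else 0))
        = - ∑ i ∈ s \ p, (2:ℤ) ^ (i : ℕ) := by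
      rw [← Finset.sum_neg_distrib, hp, ← Finset.filter_not]
      refine Finset.sum_congr rfl fun i hi => ?_
      rw [Finset.mem_filter] at hi
      obtain ⟨his, hvi⟩ := hi
      rw [hs, Finset.mem_filter] at his
      have hvi' : v.testBit (i : ℕ) = false := by
        cases hval : v.testBit (i : ℕ)
        · rfl
        · exact absurd hval hvi
      have hui : u.testBit (i : ℕ) = true := by
        cases hval : u.testBit (i : ℕ)
        · exact absurd (hvi'.trans hval.symm) his.2
        · rfl
      simp [hvi', hui]
    show (∑ i ∈ p, (2:ℤ) ^ (i : ℕ)) - ∑ i ∈ s \ p, (2:ℤ) ^ (i : ℕ) = (v : ℤ) - u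
    rw [← hpos, ← neg_neg (∑ i ∈ s \ p, (2:ℤ) ^ (i : ℕ)), ← hneg, sub_neg_eq_add, hsplit,
      ← hsub]

lemma sum_choose_bound (n k : ℕ) (hk : k ≤ n) :
    (∑ j ∈ range (k+1), n.choose j * 2 ^ j) * 1024 ^ (n - k) ≤ 1026 ^ n := by
  have h : (1026 : ℕ) ^ n = ∑ m ∈ range (n+1), 2 ^ m * 1024 ^ (n - m) * n.choose m := by
    have := add_pow (2 : ℕ) 1024 n
    norm_num at this
    exact this
  rw [h, Finset.sum_mul]
  calc ∑ j ∈ range (k+1), n.choose j * 2 ^ j * 1024 ^ (n - k)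
      ≤ ∑ j ∈ range (k+1), 2 ^ j * 1024 ^ (n - j) * n.choose j := by
        refine Finset.sum_le_sum fun j hj => ?_
        rw [Finset.mem_range] at hj
        have : (1024:ℕ) ^ (n - k) ≤ 1024 ^ (n - j) :=
          Nat.pow_le_pow_right (by norm_num) (by omega)
        calc n.choose j * 2 ^ j * 1024 ^ (n - k) ≤ n.choose j * 2 ^ j * 1024 ^ (n - j) :=
              Nat.mul_le_mul_left _ this
          _ = 2 ^ j * 1024 ^ (n - j) * n.choose j := by ring
    _ ≤ ∑ m ∈ range (n+1), 2 ^ m * 1024 ^ (n - m) * n.choose m :=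
        Finset.sum_le_sum_of_subset (Finset.range_subset_range.mpr (by omega))

lemma card_sigSet_bound (b k : ℕ) (hk : k ≤ 4 * b) :
    (sigSet (4 * b) k).card ≤ 2 ^ (b + 10 * k) := by
  have h1 : (sigSet (4 * b) k).card * 2 ^ (10 * (4 * b - k)) ≤ 2 ^ (41 * b) := by
    calc (sigSet (4 * b) k).card * 2 ^ (10 * (4 * b - k))
        = (sigSet (4 * b) k).card * 1024 ^ (4 * b - k) := by
          rw [pow_mul]; norm_num
      _ ≤ (∑ j ∈ range (k+1), (4 * b).choose j * 2 ^ j) * 1024 ^ (4 * b - k) :=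
          Nat.mul_le_mul (card_sigSet_le _ _) le_rfl
      _ ≤ 1026 ^ (4 * b) := sum_choose_bound _ _ hk
      _ ≤ 2 ^ (41 * b) := by
          rw [pow_mul, pow_mul]
          exact Nat.pow_le_pow_left (by norm_num) _
  have h2 : (41 : ℕ) * b = 10 * (4 * b - k) + (b + 10 * k) := by omega
  rw [h2, pow_add] at h1
  have hpos : 0 < 2 ^ (10 * (4 * b - k)) := Nat.pow_pos (by norm_num)
  calc (sigSet (4 * b) k).card
      = (sigSet (4 * b) k).card * 2 ^ (10 * (4 * b - k)) / 2 ^ (10 * (4 * b - k)) := by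
        rw [Nat.mul_div_cancel _ hpos]
    _ ≤ 2 ^ (10 * (4 * b - k)) * 2 ^ (b + 10 * k) / 2 ^ (10 * (4 * b - k)) :=
        Nat.div_le_div_right h1
    _ = 2 ^ (b + 10 * k) := by rw [Nat.mul_div_cancel_left _ hpos]

/-- Miltersen's inner multiplier code: there is a constant `δ > 0` such that
for every sufficiently large `b` there is a multiplier `m < 2^(3*b)` for which
the `4*b`-bit binary representations of `m*x` and `m*y` differ in at least
`δ * b` positions, for all distinct `b`-bit numbers `x ≠ y`. -/
theorem multiplier_code_exists :
    ∃ δ : ℝ, 0 < δ ∧ ∀ᶠ b : ℕ in Filter.atTop,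
      ∃ m : ℕ, m < 2 ^ (3 * b) ∧
        ∀ x y : ℕ, x < 2 ^ b → y < 2 ^ b → x ≠ y →
          δ * b ≤ (hammingDist (fun i : Fin (4 * b) => (m * x).testBit i)
            (fun i : Fin (4 * b) => (m * y).testBit i) : ℝ) := by
  refine ⟨1/20, by norm_num, Filter.Eventually.of_forall fun b => ?_⟩
  set k := b / 20 with hk
  set T := sigSet (4 * b) k with hT
  set bad : Finset ℕ := (Finset.Ico 1 (2 ^ b)).biUnion
    (fun d => (Finset.range (2 ^ (3 * b))).filter fun m => ((m * d : ℕ) : ℤ) ∈ T) with hbaddef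
  have hdcard : ∀ d ∈ Finset.Ico 1 (2 ^ b),
      ((Finset.range (2 ^ (3 * b))).filter fun m => ((m * d : ℕ) : ℤ) ∈ T).card ≤ T.card := by
    intro d hd
    refine Finset.card_le_card_of_injOn (fun m => ((m * d : ℕ) : ℤ)) ?_ ?_
    · intro m hm
      exact (Finset.mem_filter.mp hm).2
    · intro m1 _ m2 _ he
      have hd1 : 1 ≤ d := (Finset.mem_Ico.mp hd).1
      have : m1 * d = m2 * d := by
        have he' : ((m1 * d : ℕ) : ℤ) = ((m2 * d : ℕ) : ℤ) := he
        exact_mod_cast he'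
      exact Nat.eq_of_mul_eq_mul_right (by omega) this
  have hbadcard : bad.card < 2 ^ (3 * b) := by
    have hk4b : k ≤ 4 * b := by omega
    calc bad.card ≤ ∑ d ∈ Finset.Ico 1 (2 ^ b),
          ((Finset.range (2 ^ (3 * b))).filter fun m => ((m * d : ℕ) : ℤ) ∈ T).card :=
        Finset.card_biUnion_le
      _ ≤ ∑ _d ∈ Finset.Ico 1 (2 ^ b), T.card := Finset.sum_le_sum hdcard
      _ = (2 ^ b - 1) * T.card := by rw [Finset.sum_const, Nat.card_Ico, smul_eq_mul]
      _ ≤ (2 ^ b - 1) * 2 ^ (b + 10 * k) :=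
        Nat.mul_le_mul_left _ (card_sigSet_bound b k hk4b)
      _ < 2 ^ b * 2 ^ (b + 10 * k) := by
        have h1 : (2:ℕ) ^ b - 1 < 2 ^ b := by
          have := Nat.one_le_two_pow (n := b); omega
        exact Nat.mul_lt_mul_of_lt_of_le h1 le_rfl (Nat.pow_pos (by norm_num))
      _ = 2 ^ (b + (b + 10 * k)) := (pow_add 2 b (b + 10 * k)).symm
      _ ≤ 2 ^ (3 * b) := Nat.pow_le_pow_right (by norm_num) (by omega)
  have hnotsub : ¬ (Finset.range (2 ^ (3 * b)) ⊆ bad) := by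
    intro h
    have := Finset.card_le_card h
    rw [Finset.card_range] at this
    omega
  obtain ⟨m, hmr, hmb⟩ := Finset.not_subset.mp hnotsub
  rw [Finset.mem_range] at hmr
  refine ⟨m, hmr, ?_⟩
  have hmx4 : ∀ x : ℕ, x < 2 ^ b → m * x < 2 ^ (4 * b) := by
    intro x hx
    calc m * x < 2 ^ (3 * b) * 2 ^ b :=
        Nat.mul_lt_mul_of_lt_of_le hmr (le_of_lt hx) (Nat.pow_pos (by norm_num))
      _ = 2 ^ (4 * b) := by rw [← pow_add]; ring_nf
  have key : ∀ x y : ℕ, x < 2 ^ b → y < 2 ^ b → y < x →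
      (1/20 : ℝ) * b ≤ (hammingDist (fun i : Fin (4 * b) => (m * x).testBit i)
        (fun i : Fin (4 * b) => (m * y).testBit i) : ℝ) := by
    intro x y hx hy hyx
    set d := x - y with hd
    have hdmem : d ∈ Finset.Ico 1 (2 ^ b) := Finset.mem_Ico.mpr ⟨by omega, by omega⟩
    have hdist : k + 1 ≤ hammingDist (fun i : Fin (4 * b) => (m * x).testBit i)
        (fun i : Fin (4 * b) => (m * y).testBit i) := by
      by_contra hlt
      push_neg at hlt
      have hmem : ((m * x : ℕ) : ℤ) - (m * y : ℕ) ∈ sigSet (4 * b) k :=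
        sub_mem_sigSet (hmx4 y hy) (hmx4 x hx) (by omega)
      have heq : ((m * x : ℕ) : ℤ) - (m * y : ℕ) = ((m * d : ℕ) : ℤ) := by
        have hxd : x = y + d := by omega
        push_cast [hxd]
        ring
      rw [heq] at hmem
      exact hmb (Finset.mem_biUnion.mpr
        ⟨d, hdmem, Finset.mem_filter.mpr ⟨Finset.mem_range.mpr hmr, hmem⟩⟩)
    have hb20 : (b : ℝ) ≤ 20 * (k + 1 : ℕ) := by
      have : b ≤ 20 * (k + 1) := by omega
      exact_mod_cast this
    calc (1/20 : ℝ) * b ≤ (k + 1 : ℕ) := by linarith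
      _ ≤ _ := by exact_mod_cast hdist
  intro x y hx hy hxy
  rcases Nat.lt_or_ge y x with h | h
  · exact key x y hx hy h
  · have hxy' : x < y := by omega
    rw [hammingDist_comm]
    exact key y x hy hx hxy'
end

section
/- Let s, b, t be natural numbers with b ≤ s, let c : Fin t → ℕ satisfy c i < 2^b for all i, and let m be a natural number with m < 2^{s − b}. Then (∑_{i} c i · 2^{s·i}) · m = ∑_{i} (c i · m) · 2^{s·i}, and moreover for every i, the i-th base-2^s digit of the product is exactly c i · m; that is, ((∑_{j} c j · 2^{s·j}) · m) / 2^{s·i} mod 2^s = c i · m (with natural-number division and modulo). -/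
lemma ofDigits_ofFn_eq_sum (B : ℕ) : ∀ (t : ℕ) (d : Fin t → ℕ),
    Nat.ofDigits B (List.ofFn d) = ∑ j, d j * B ^ (j : ℕ) := by
  intro t
  induction t with
  | zero => simp [Nat.ofDigits]
  | succ n ih =>
    intro d
    rw [List.ofFn_succ, Nat.ofDigits_cons, ih, Fin.sum_univ_succ]
    rw [Finset.mul_sum]
    simp [pow_succ, Fin.val_succ]
    ring_nf

lemma digit_extract {B t : ℕ} (hB : 0 < B) (d : Fin t → ℕ) (hd : ∀ j, d j < B)
    (i : Fin t) : (∑ j, d j * B ^ (j : ℕ)) / B ^ (i : ℕ) % B = d i := by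
  set L := List.ofFn d with hL
  have hmem : ∀ l ∈ L, l < B := by
    intro l hl
    rw [hL, List.mem_ofFn] at hl
    obtain ⟨j, rfl⟩ := hl
    exact hd j
  rw [← ofDigits_ofFn_eq_sum, ← hL,
    Nat.ofDigits_div_pow_eq_ofDigits_drop _ hB _ hmem]
  have hlen : (i : ℕ) < L.length := by simp [hL]
  rw [List.drop_eq_getElem_cons hlen, Nat.ofDigits_cons]
  have : L[(i : ℕ)] = d i := by simp [hL]
  rw [this]
  simp [Nat.add_mul_mod_self_left, Nat.mod_eq_of_lt (hd i)]

/-- Word-parallel multiplication of spread fields: if the fields `c i < 2^b`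
are placed at bit positions `s * i` with `b ≤ s`, and `m < 2^(s-b)`, then
multiplying the whole word by `m` multiplies each field independently, and the
`i`-th base-`2^s` digit of the product is exactly `c i * m`. -/
theorem parallel_field_multiplication (s b t : ℕ) (hb : b ≤ s)
    (c : Fin t → ℕ) (hc : ∀ i, c i < 2 ^ b)
    (m : ℕ) (hm : m < 2 ^ (s - b)) :
    (∑ i, c i * 2 ^ (s * (i : ℕ))) * m = ∑ i, (c i * m) * 2 ^ (s * (i : ℕ)) ∧
    ∀ i : Fin t,
      ((∑ j, c j * 2 ^ (s * (j : ℕ))) * m) / 2 ^ (s * (i : ℕ)) % 2 ^ s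
        = c i * m := by
  have h1 : (∑ i, c i * 2 ^ (s * (i : ℕ))) * m
      = ∑ i, (c i * m) * 2 ^ (s * (i : ℕ)) := by
    rw [Finset.sum_mul]
    exact Finset.sum_congr rfl fun i _ => by ring
  refine ⟨h1, fun i => ?_⟩
  rw [h1]
  have hd : ∀ j, c j * m < 2 ^ s := by
    intro j
    calc c j * m < 2 ^ b * 2 ^ (s - b) := Nat.mul_lt_mul'' (hc j) hm
    _ = 2 ^ s := by rw [← pow_add, Nat.add_sub_cancel' hb]
  have := digit_extract (B := 2 ^ s) (pow_pos (by norm_num) s)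
    (fun j => c j * m) hd i
  simpa [pow_mul] using this
end
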